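/- arXiv:2009.01677 — 9 statements merged into one kernel-verified Lean document; each statement's English description precedes it below -/
import Mathlib

section
/- For every integer n ≥ 1, the number of distinct n×n matrices over ℤ/3ℤ of the form (zg,f)_n − (zg,f)_nᵀ, where g, f range over all formal power series over ℤ/3ℤ with constant term of f equal to 0, and (zg,f)_n denotes the n×n matrix whose (i,j)-entry (0 ≤ i,j ≤ n−1) is the coefficient of z^i in z·g·f^j, equals (3^{2(n−1)} + 3)/4. -/
open PowerSeries Matrix

/-- The `n × n` matrix `(zg, f)_n` whose `(i,j)`-entry (0-indexed) is the coefficient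
of `z^i` in `z·g·f^j`. -/
noncomputable def riordanMat (n : ℕ) (g f : PowerSeries (ZMod 3)) :
    Matrix (Fin n) (Fin n) (ZMod 3) :=
  Matrix.of fun i j => coeff (i : ℕ) (X * g * f ^ (j : ℕ))

lemma coeff_mul_congr {N : ℕ} {a a' b b' : PowerSeries (ZMod 3)}
    (ha : ∀ i < N, coeff i a = coeff i a')
    (hb : ∀ i < N, coeff i b = coeff i b') :
    ∀ i < N, coeff i (a * b) = coeff i (a' * b') := by
  intro i hi
  rw [coeff_mul, coeff_mul]
  refine Finset.sum_congr rfl fun p hp => ?_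
  rw [Finset.HasAntidiagonal.mem_antidiagonal] at hp
  rw [ha p.1 (by omega), hb p.2 (by omega)]

lemma coeff_pow_congr {N : ℕ} {f f' : PowerSeries (ZMod 3)}
    (hf : ∀ i < N, coeff i f = coeff i f') (j : ℕ) :
    ∀ i < N, coeff i (f ^ j) = coeff i (f' ^ j) := by
  induction j with
  | zero => simp
  | succ j ih =>
    intro i hi
    rw [pow_succ, pow_succ]
    exact coeff_mul_congr ih hf i hi

lemma coeff_mul_pow_congr {m d : ℕ} {g g' f f' : PowerSeries (ZMod 3)}
    (hg : ∀ i < m, coeff i g = coeff i g')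
    (hg0 : ∀ i < d, coeff i g = 0)
    (hf : ∀ i < m - d, coeff i f = coeff i f')
    (j k : ℕ) (hk : k < m) :
    coeff k (g * f ^ j) = coeff k (g' * f' ^ j) := by
  rw [coeff_mul, coeff_mul]
  refine Finset.sum_congr rfl fun p hp => ?_
  rw [Finset.HasAntidiagonal.mem_antidiagonal] at hp
  by_cases hpd : p.1 < d
  · have h1 : coeff p.1 g = 0 := hg0 _ hpd
    have h2 : coeff p.1 g' = 0 := by rw [← hg _ (by omega)]; exact h1
    rw [h1, h2, zero_mul, zero_mul]
  · rw [hg p.1 (by omega), coeff_pow_congr hf j p.2 (by omega)]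

lemma coeff_pow_eq_zero {f : PowerSeries (ZMod 3)} (hf : constantCoeff f = 0)
    {j b : ℕ} (hb : b < j) : coeff b (f ^ j) = 0 := by
  have : (X : PowerSeries (ZMod 3)) ^ j ∣ f ^ j :=
    pow_dvd_pow_of_dvd (X_dvd_iff.mpr hf) j
  exact (X_pow_dvd_iff.mp this) b hb

lemma coeff_mul_pow_lt {g f : PowerSeries (ZMod 3)} (hf : constantCoeff f = 0)
    {k j : ℕ} (hkj : k < j) : coeff k (g * f ^ j) = 0 := by
  rw [coeff_mul]
  refine Finset.sum_eq_zero fun p hp => ?_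
  rw [Finset.HasAntidiagonal.mem_antidiagonal] at hp
  rw [coeff_pow_eq_zero hf (by omega), mul_zero]

lemma coeff_mul_eq_zero {m : ℕ} {g h : PowerSeries (ZMod 3)}
    (hg : ∀ i < m, coeff i g = 0) {k : ℕ} (hk : k < m) :
    coeff k (g * h) = 0 := by
  rw [coeff_mul]
  refine Finset.sum_eq_zero fun p hp => ?_
  rw [Finset.HasAntidiagonal.mem_antidiagonal] at hp
  rw [hg p.1 (by omega), zero_mul]

def Param (m : ℕ) : Type :=
  Option ((d : Fin m) × (Fin 2 × (Fin (m - 1 - d) → ZMod 3) × (Fin (m - 1 - d) → ZMod 3)))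

instance (m : ℕ) : Fintype (Param m) := by unfold Param; infer_instance

noncomputable def gOf (m : ℕ) (p : Param m) : PowerSeries (ZMod 3) :=
  match p with
  | none => 0
  | some ⟨d, c, a, _b⟩ => PowerSeries.mk fun i =>
      if i = (d : ℕ) then ((c : ℕ) + 1 : ZMod 3)
      else if h : (d : ℕ) < i ∧ i < m then a ⟨i - d - 1, by omega⟩ else 0

noncomputable def fOf (m : ℕ) (p : Param m) : PowerSeries (ZMod 3) :=
  match p with
  | none => 0
  | some ⟨d, _c, _a, b⟩ => PowerSeries.mk fun i =>
      if h : 1 ≤ i ∧ i ≤ m - 1 - (d : ℕ) then b ⟨i - 1, by omega⟩ else 0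

lemma constantCoeff_fOf (m : ℕ) (p : Param m) : constantCoeff (fOf m p) = 0 := by
  rcases p with _ | ⟨d, c, a, b⟩
  · simp [fOf]
  · rw [fOf, ← coeff_zero_eq_constantCoeff, coeff_mk]
    simp

lemma gOf_coeff_d {m : ℕ} (d : Fin m) (c : Fin 2) (a b : Fin (m - 1 - d) → ZMod 3) :
    coeff (d : ℕ) (gOf m (some ⟨d, c, a, b⟩)) = ((c : ℕ) + 1 : ZMod 3) := by
  rw [gOf, coeff_mk, if_pos rfl]

lemma gOf_coeff_lt {m : ℕ} (d : Fin m) (c : Fin 2) (a b : Fin (m - 1 - d) → ZMod 3)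
    {i : ℕ} (hi : i < d) :
    coeff i (gOf m (some ⟨d, c, a, b⟩)) = 0 := by
  rw [gOf, coeff_mk, if_neg (by omega), dif_neg (by omega)]

lemma gOf_coeff_mid {m : ℕ} (d : Fin m) (c : Fin 2) (a b : Fin (m - 1 - d) → ZMod 3)
    {i : ℕ} (h : (d : ℕ) < i ∧ i < m) :
    coeff i (gOf m (some ⟨d, c, a, b⟩)) = a ⟨i - d - 1, by omega⟩ := by
  rw [gOf, coeff_mk, if_neg (by omega), dif_pos h]

lemma fOf_coeff_pos {m : ℕ} (d : Fin m) (c : Fin 2) (a b : Fin (m - 1 - d) → ZMod 3)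
    {i : ℕ} (h : 1 ≤ i ∧ i ≤ m - 1 - (d : ℕ)) :
    coeff i (fOf m (some ⟨d, c, a, b⟩)) = b ⟨i - 1, by omega⟩ := by
  rw [fOf, coeff_mk, dif_pos h]

lemma fOf_coeff_out {m : ℕ} (d : Fin m) (c : Fin 2) (a b : Fin (m - 1 - d) → ZMod 3)
    {i : ℕ} (h : ¬(1 ≤ i ∧ i ≤ m - 1 - (d : ℕ))) :
    coeff i (fOf m (some ⟨d, c, a, b⟩)) = 0 := by
  rw [fOf, coeff_mk, dif_neg h]

lemma succ_ne_zero' (c : Fin 2) : ((c : ℕ) + 1 : ZMod 3) ≠ 0 := by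
  fin_cases c <;> decide

noncomputable def Phi (m : ℕ) (p : Param m) : Matrix (Fin (m + 1)) (Fin (m + 1)) (ZMod 3) :=
  riordanMat (m + 1) (gOf m p) (fOf m p) - (riordanMat (m + 1) (gOf m p) (fOf m p))ᵀ

lemma riordan_row_zero {n : ℕ} {g f : PowerSeries (ZMod 3)} (i j : Fin n) (hi : (i : ℕ) = 0) :
    riordanMat n g f i j = 0 := by
  simp only [riordanMat, Matrix.of_apply, hi, mul_assoc]
  rw [coeff_zero_eq_constantCoeff, _root_.map_mul]
  simp

lemma riordan_row_succ {n : ℕ} {g f : PowerSeries (ZMod 3)} (i j : Fin n) (k : ℕ)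
    (hi : (i : ℕ) = k + 1) :
    riordanMat n g f i j = coeff k (g * f ^ (j : ℕ)) := by
  simp only [riordanMat, Matrix.of_apply, hi, mul_assoc]
  exact coeff_succ_X_mul k _

lemma riordan_tri {n : ℕ} {g f : PowerSeries (ZMod 3)} (hf : constantCoeff f = 0)
    (i j : Fin n) (hij : (i : ℕ) ≤ (j : ℕ)) : riordanMat n g f i j = 0 := by
  cases hi : (i : ℕ) with
  | zero => exact riordan_row_zero i j hi
  | succ k =>
    rw [riordan_row_succ i j k hi]
    exact coeff_mul_pow_lt hf (by omega)

lemma riordan_congr (m d : ℕ) {g g' f f' : PowerSeries (ZMod 3)}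
    (hg : ∀ i < m, coeff i g = coeff i g')
    (hg0 : ∀ i < d, coeff i g = 0)
    (hf : ∀ i < m - d, coeff i f = coeff i f') :
    riordanMat (m + 1) g f = riordanMat (m + 1) g' f' := by
  ext i j
  cases hi : (i : ℕ) with
  | zero => rw [riordan_row_zero i j hi, riordan_row_zero i j hi]
  | succ k =>
    rw [riordan_row_succ i j k hi, riordan_row_succ i j k hi]
    exact coeff_mul_pow_congr hg hg0 hf _ k (by have := i.isLt; omega)

lemma Phi_entry (m : ℕ) (p : Param m) {k j : ℕ} (hj : j ≤ k) (hk : k < m) :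
    Phi m p ⟨k + 1, by omega⟩ ⟨j, by omega⟩
      = coeff k (gOf m p * (fOf m p) ^ j) := by
  have h0 : riordanMat (m + 1) (gOf m p) (fOf m p) (⟨j, by omega⟩ : Fin (m + 1))
      (⟨k + 1, by omega⟩ : Fin (m + 1)) = 0 :=
    riordan_tri (constantCoeff_fOf m p) _ _ (by simp; omega)
  simp only [Phi, Matrix.sub_apply, Matrix.transpose_apply, h0, sub_zero]
  exact riordan_row_succ _ _ k rfl

lemma Phi_inj (m : ℕ) : Function.Injective (Phi m) := by
  intro p q h
  have H : ∀ k j : ℕ, j ≤ k → k < m →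
      coeff k (gOf m p * (fOf m p) ^ j)
        = coeff k (gOf m q * (fOf m q) ^ j) := by
    intro k j hj hk
    rw [← Phi_entry m p hj hk, ← Phi_entry m q hj hk, h]
  have Hg : ∀ k, k < m → coeff k (gOf m p) = coeff k (gOf m q) := by
    intro k hk
    have := H k 0 (Nat.zero_le _) hk
    simpa using this
  rcases p with _ | ⟨d, c, a, b⟩ <;> rcases q with _ | ⟨d', c', a', b'⟩
  · rfl
  · exfalso
    have := Hg d' d'.isLt
    rw [gOf_coeff_d] at this
    exact succ_ne_zero' c' (by rw [← this]; simp [gOf])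
  · exfalso
    have := Hg d d.isLt
    rw [gOf_coeff_d] at this
    exact succ_ne_zero' c (by rw [this]; simp [gOf])
  · -- both some
    have hdd : (d : ℕ) = (d' : ℕ) := by
      by_contra hne
      rcases lt_or_gt_of_ne hne with hlt | hgt
      · have := Hg d d.isLt
        rw [gOf_coeff_d, gOf_coeff_lt d' c' a' b' hlt] at this
        exact succ_ne_zero' c this
      · have := Hg d' d'.isLt
        rw [gOf_coeff_d, gOf_coeff_lt d c a b hgt] at this
        exact succ_ne_zero' c' this.symm
    have hdF : d = d' := Fin.ext hdd
    subst hdF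
    have hcc : c = c' := by
      have := Hg d d.isLt
      rw [gOf_coeff_d, gOf_coeff_d] at this
      revert this
      fin_cases c <;> fin_cases c' <;> decide
    subst hcc
    have haa : a = a' := by
      funext i
      have hi : (d : ℕ) + 1 + (i : ℕ) < m := by have := i.isLt; omega
      have := Hg ((d : ℕ) + 1 + (i : ℕ)) hi
      rw [gOf_coeff_mid d c a b (by omega), gOf_coeff_mid d c a' b' (by omega)] at this
      have hfin : i = (⟨(d : ℕ) + 1 + (i : ℕ) - (d : ℕ) - 1, by omega⟩ : Fin (m - 1 - (d : ℕ))) := by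
        apply Fin.ext; simp; omega
      rw [hfin]
      exact this
    subst haa
    have hgeq : gOf m (some ⟨d, c, a, b⟩) = gOf m (some ⟨d, c, a, b'⟩) := rfl
    have K : ∀ r, r ≤ m - 1 - (d : ℕ) →
        coeff r (fOf m (some ⟨d, c, a, b⟩))
          = coeff r (fOf m (some ⟨d, c, a, b'⟩)) := by
      intro r
      induction r using Nat.strong_induction_on with
      | _ r ih =>
        intro hr
        rcases Nat.eq_zero_or_pos r with rfl | hr1
        · rw [fOf_coeff_out d c a b (by omega), fOf_coeff_out d c a b' (by omega)]
        · have hdr : (d : ℕ) + r < m := by have := d.isLt; omega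
          have hmain := H ((d : ℕ) + r) 1 (by omega) hdr
          rw [pow_one, pow_one, ← hgeq] at hmain
          set g := gOf m (some ⟨d, c, a, b⟩) with hg
          set fp := fOf m (some ⟨d, c, a, b⟩) with hfp
          set fq := fOf m (some ⟨d, c, a, b'⟩) with hfq
          have hz : ∑ x ∈ Finset.HasAntidiagonal.antidiagonal ((d : ℕ) + r),
              coeff x.1 g * (coeff x.2 fp - coeff x.2 fq) = 0 := by
            simp only [mul_sub]
            rw [Finset.sum_sub_distrib, ← coeff_mul, ← coeff_mul, hmain, sub_self]
          rw [Finset.sum_eq_single ((d : ℕ), r)] at hz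
          · have hgd : coeff (d : ℕ) g ≠ 0 := by
              rw [hg, gOf_coeff_d]; exact succ_ne_zero' c
            rcases mul_eq_zero.mp hz with h1 | h1
            · exact absurd h1 hgd
            · exact sub_eq_zero.mp h1
          · intro x hx hxne
            rw [Finset.HasAntidiagonal.mem_antidiagonal] at hx
            rcases lt_trichotomy x.2 r with h2 | h2 | h2
            · rw [ih x.2 (by omega) (by omega), sub_self, mul_zero]
            · exact absurd (Prod.ext (by omega) h2) hxne
            · rw [hg, gOf_coeff_lt d c a b (show x.1 < (d : ℕ) by omega), zero_mul]
          · intro hmem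
            simp [Finset.HasAntidiagonal.mem_antidiagonal] at hmem
    have hbb : b = b' := by
      funext i
      have hi1 : (i : ℕ) + 1 ≤ m - 1 - (d : ℕ) := by have := i.isLt; omega
      have := K ((i : ℕ) + 1) hi1
      rw [fOf_coeff_pos d c a b ⟨by omega, hi1⟩, fOf_coeff_pos d c a b' ⟨by omega, hi1⟩] at this
      simpa using this
    subst hbb
    rfl

lemma range_eq (m : ℕ) :
    {S : Matrix (Fin (m + 1)) (Fin (m + 1)) (ZMod 3) |
        ∃ g f : PowerSeries (ZMod 3), constantCoeff f = 0 ∧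
          S = riordanMat (m + 1) g f - (riordanMat (m + 1) g f)ᵀ}
      = Set.range (Phi m) := by
  ext S
  simp only [Set.mem_setOf_eq, Set.mem_range]
  constructor
  · rintro ⟨g, f, hf0, rfl⟩
    by_cases hg : ∀ i < m, coeff i g = 0
    · refine ⟨none, ?_⟩
      have hB : riordanMat (m + 1) (gOf m none) (fOf m none) = riordanMat (m + 1) g f := by
        refine riordan_congr m m ?_ ?_ ?_
        · intro i hi
          rw [hg i hi]; simp [gOf]
        · intro i hi; simp [gOf]
        · intro i hi; omega
      unfold Phi; rw [hB]
    · push_neg at hg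
      have hex : ∃ i, i < m ∧ coeff i g ≠ 0 := by
        obtain ⟨i, hi1, hi2⟩ := hg; exact ⟨i, hi1, hi2⟩
      classical
      set d := Nat.find hex with hd_def
      have hd := Nat.find_spec hex
      have hdmin : ∀ i < d, coeff i g = 0 := by
        intro i hi
        by_contra hne
        exact absurd ⟨by omega, hne⟩ (Nat.find_min hex hi)
      have h12 : coeff d g = 1 ∨ coeff d g = 2 := by
        have := hd.2
        revert this
        generalize coeff d g = x
        revert x; decide
      set c : Fin 2 := if coeff d g = 1 then 0 else 1 with hc_def
      have hc : ((c : ℕ) + 1 : ZMod 3) = coeff d g := by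
        rcases h12 with h | h
        · rw [hc_def, if_pos h, h]; decide
        · rw [hc_def, if_neg (by rw [h]; decide), h]; decide
      refine ⟨some ⟨⟨d, hd.1⟩, c, fun i => coeff (d + 1 + (i : ℕ)) g,
        fun i => coeff ((i : ℕ) + 1) f⟩, ?_⟩
      have hB : riordanMat (m + 1)
          (gOf m (some ⟨⟨d, hd.1⟩, c, fun i => coeff (d + 1 + (i : ℕ)) g,
            fun i => coeff ((i : ℕ) + 1) f⟩))
          (fOf m (some ⟨⟨d, hd.1⟩, c, fun i => coeff (d + 1 + (i : ℕ)) g,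
            fun i => coeff ((i : ℕ) + 1) f⟩))
          = riordanMat (m + 1) g f := by
        refine riordan_congr m d ?_ ?_ ?_
        · intro i hi
          rcases lt_trichotomy i d with h | h | h
          · rw [gOf_coeff_lt _ _ _ _ h, hdmin i h]
          · subst h
            rw [gOf, coeff_mk, if_pos rfl]
            exact hc
          · rw [gOf, coeff_mk, if_neg (show ¬ i = d by omega),
              dif_pos (show d < i ∧ i < m from ⟨h, hi⟩)]
            show coeff (d + 1 + (i - d - 1)) g = coeff i g
            rw [show d + 1 + (i - d - 1) = i by omega]
        · intro i hi
          exact gOf_coeff_lt _ _ _ _ hi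
        · intro i hi
          rcases Nat.eq_zero_or_pos i with rfl | hi1
          · rw [fOf_coeff_out _ _ _ _ (by omega)]
            rw [← coeff_zero_eq_constantCoeff] at hf0
            rw [hf0]
          · rw [fOf, coeff_mk,
              dif_pos (show 1 ≤ i ∧ i ≤ m - 1 - d from ⟨hi1, by omega⟩)]
            show coeff (i - 1 + 1) f = coeff i f
            rw [show i - 1 + 1 = i by omega]
      unfold Phi; rw [hB]
  · rintro ⟨p, rfl⟩
    exact ⟨gOf m p, fOf m p, constantCoeff_fOf m p, rfl⟩

lemma card_param (m : ℕ) : Fintype.card (Param m) = (3 ^ (2 * m) + 3) / 4 := by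
  have key : ∀ M : ℕ, 3 ^ (2 * M) + 3 = 4 * (1 + ∑ j ∈ Finset.range M, 2 * (3 ^ j * 3 ^ j)) := by
    intro M
    induction M with
    | zero => simp
    | succ M ih =>
      rw [Finset.sum_range_succ]
      have e1 : (3 : ℕ) ^ (2 * (M + 1)) = 9 * 3 ^ (2 * M) := by ring
      have e2 : (3 : ℕ) ^ M * 3 ^ M = 3 ^ (2 * M) := by rw [← pow_add, two_mul]
      rw [e1, e2]
      omega
  have h1 : Fintype.card (Param m)
      = 1 + ∑ d : Fin m, 2 * (3 ^ (m - 1 - (d : ℕ)) * 3 ^ (m - 1 - (d : ℕ))) := by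
    simp [Param, Fintype.card_option, Fintype.card_sigma, Fintype.card_prod, Fintype.card_fun,
      ZMod.card]
    exact Nat.add_comm _ _
  rw [h1, Fin.sum_univ_eq_sum_range (fun d => 2 * (3 ^ (m - 1 - d) * 3 ^ (m - 1 - d))) m,
    Finset.sum_range_reflect (fun j => 2 * (3 ^ j * 3 ^ j)) m]
  rw [key m, Nat.mul_div_cancel_left _ (by norm_num)]

/-- The number of distinct `n × n` matrices over `ℤ/3ℤ` of the form
`(zg,f)_n − (zg,f)_nᵀ`, where `g, f` range over all formal power series over `ℤ/3ℤ`
with `f(0) = 0`, equals `(3^{2(n−1)} + 3)/4`. -/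
theorem num_oriented_riordan_graphs (n : ℕ) (hn : 1 ≤ n) :
    {S : Matrix (Fin n) (Fin n) (ZMod 3) |
        ∃ g f : PowerSeries (ZMod 3), constantCoeff f = 0 ∧
          S = riordanMat n g f - (riordanMat n g f)ᵀ}.ncard
      = (3 ^ (2 * (n - 1)) + 3) / 4 := by
  rcases n with _ | m
  · exact absurd hn (by omega)
  · rw [range_eq m, ← Nat.card_coe_set_eq, Nat.card_range_of_injective (Phi_inj m),
      Nat.card_eq_fintype_card, card_param]
    norm_num
end

section
/- Let g, f be formal power series over ℤ/3ℤ with f(0) = 0, and let A be a power series over ℤ/3ℤ such that f = z·A(f), with [z^0]A = 1 and [z^m]A = 0 for all 1 ≤ m ≤ ℓ (for some fixed integer ℓ ≥ 0). Then for every s ≥ 0, every k ∈ {0,1,…,ℓ}, and every integer α ≥ 1: for all vertex labels i, j with 1 ≤ j < i ≤ (k+1)·3^s + 1, one has [z^{i+α(k+1)3^s−2}] g f^{j+α(k+1)3^s−1} = [z^{i−2}] g f^{j−1}. In particular, in the oriented Riordan graph G_n^σ(g,f) the induced subgraph on the vertices {1,…,(k+1)3^s+1} is isomorphic (via the label shift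 v ↦ v + α(k+1)3^s) to the induced subgraph on {α(k+1)3^s+1,…,(α+1)(k+1)3^s+1}, and likewise the induced subgraph on {1,…,(k+1)3^s} is isomorphic to that on {α(k+1)3^s+1,…,(α+1)(k+1)3^s}; i.e. G_n^σ(g,f) has the fractal property. -/
open PowerSeries

/-- Substitution `A(f)` of a power series `f` into a power series `A`.
When `f(0) = 0`, the coefficient of `z^n` in `A(f)` only involves `f^k` for `k ≤ n`
(since `f^k` has order `≥ k`), so the finite sum below is the usual composition. -/
noncomputable def psComp {R : Type*} [CommRing R] (A f : PowerSeries R) : PowerSeries R :=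
  PowerSeries.mk fun n => ∑ k ∈ Finset.range (n + 1), coeff k A * coeff n (f ^ k)

instance : CharP (PowerSeries (ZMod 3)) 3 :=
  charP_of_injective_ringHom (PowerSeries.C_injective) 3

/-- Fractal property of oriented Riordan graphs: let `g, f, A` be power series over
`ℤ/3ℤ` with `f(0) = 0`, `f = z·A(f)`, `[z^0]A = 1` and `[z^m]A = 0` for `1 ≤ m ≤ ℓ`.
Then for every `s ≥ 0`, `k ≤ ℓ` and `α ≥ 1`, and all vertex labels
`1 ≤ j < i ≤ (k+1)·3^s + 1`, the skew-adjacency entries satisfy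
`r (i+α(k+1)3^s) (j+α(k+1)3^s) = r i j` where `r i j = [z^{i−2}] g f^{j−1}`;
i.e. the label shift `v ↦ v + α(k+1)3^s` is an isomorphism
`⟨{1,…,(k+1)3^s+1}⟩ ≅ ⟨{α(k+1)3^s+1,…,(α+1)(k+1)3^s+1}⟩` (and restricting to
`i ≤ (k+1)3^s` gives `⟨{1,…,(k+1)3^s}⟩ ≅ ⟨{α(k+1)3^s+1,…,(α+1)(k+1)3^s}⟩`). -/
theorem oriented_riordan_fractal (g f A : PowerSeries (ZMod 3)) (ℓ : ℕ)
    (hf : constantCoeff f = 0)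
    (hA0 : coeff 0 A = 1)
    (hAm : ∀ m : ℕ, 1 ≤ m → m ≤ ℓ → coeff m A = 0)
    (hfA : f = X * psComp A f) :
    ∀ (s k α : ℕ), k ≤ ℓ → 1 ≤ α →
      ∀ i j : ℕ, 1 ≤ j → j < i → i ≤ (k + 1) * 3 ^ s + 1 →
        coeff (i + α * (k + 1) * 3 ^ s - 2)
            (g * f ^ (j + α * (k + 1) * 3 ^ s - 1)) =
          coeff (i - 2) (g * f ^ (j - 1)) := by
  intro s k α hk hα i j hj hji hi
  -- E0 := A(f) - 1 has order ≥ ℓ + 1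
  set E0 : PowerSeries (ZMod 3) := psComp A f - 1 with hE0def
  have hE0dvd : (X : PowerSeries (ZMod 3)) ^ (ℓ + 1) ∣ E0 := by
    rw [PowerSeries.X_pow_dvd_iff]
    intro m hm
    rw [hE0def, map_sub]
    rcases Nat.eq_zero_or_pos m with hm0 | hm0
    · subst hm0
      simp only [psComp, coeff_mk, Finset.range_one, Finset.sum_singleton, pow_zero]
      simp [hA0]
    · have hmℓ : m ≤ ℓ := by omega
      have h1 : coeff m (1 : PowerSeries (ZMod 3)) = 0 := by
        rw [coeff_one, if_neg (by omega : ¬ m = 0)]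
      rw [h1, sub_zero]
      simp only [psComp, coeff_mk]
      apply Finset.sum_eq_zero
      intro c hc
      rcases Nat.eq_zero_or_pos c with hc0 | hc0
      · subst hc0
        rw [pow_zero, coeff_one, if_neg (by omega : ¬ m = 0), mul_zero]
      · have : c ≤ ℓ := by
          have := Finset.mem_range.mp hc; omega
        rw [hAm c hc0 this, zero_mul]
  have hfX : f = X * (1 + E0) := by
    rw [hE0def]
    have h2 : (1 : PowerSeries (ZMod 3)) + (psComp A f - 1) = psComp A f := by ring
    rw [h2]; exact hfA
  -- f ^ 3^s = X^3^s * (1 + E0^3^s)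
  have hfrob : (1 + E0) ^ (3 : ℕ) ^ s = 1 + E0 ^ (3 : ℕ) ^ s := by
    have := add_pow_char_pow (R := PowerSeries (ZMod 3)) (p := 3) (x := 1)
      (y := E0) (n := s)
    simpa using this
  set T : ℕ := 3 ^ s with hT
  set E : PowerSeries (ZMod 3) := E0 ^ T with hE
  have hfT : f ^ T = X ^ T * (1 + E) := by
    rw [hfX, mul_pow, hfrob]
  have hEdvd : (X : PowerSeries (ZMod 3)) ^ ((ℓ + 1) * T) ∣ E := by
    rw [hE, pow_mul]
    exact pow_dvd_pow_of_dvd hE0dvd T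
  set M : ℕ := α * (k + 1) * T with hM
  -- f ^ M = X ^ M * (1 + E * D) for some D
  obtain ⟨D, hD⟩ : ∃ D, (1 + E) ^ (α * (k + 1)) = 1 + E * D := by
    have h := sub_dvd_pow_sub_pow (1 + E) 1 (α * (k + 1))
    simp only [add_sub_cancel_left, one_pow] at h
    obtain ⟨D, hD⟩ := h
    exact ⟨D, by linear_combination hD⟩
  have hfM : f ^ M = X ^ M * (1 + E * D) := by
    rw [hM, mul_comm (α * (k + 1)) T, pow_mul, hfT, mul_pow, ← pow_mul,
      mul_comm T (α * (k + 1)), hD]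
  -- rewrite indices
  have hi2 : 2 ≤ i := by omega
  have hidx1 : i + M - 2 = (i - 2) + M := by omega
  have hidx2 : j + M - 1 = (j - 1) + M := by omega
  rw [hidx1, hidx2, pow_add, hfM]
  have hre : g * (f ^ (j - 1) * (X ^ M * (1 + E * D)))
      = X ^ M * (g * f ^ (j - 1) * (1 + E * D)) := by ring
  rw [hre, PowerSeries.coeff_X_pow_mul]
  rw [mul_add, mul_one, map_add]
  have hzero : coeff (i - 2) (g * f ^ (j - 1) * (E * D)) = 0 := by
    have hdvd : (X : PowerSeries (ZMod 3)) ^ ((ℓ + 1) * T) ∣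
        g * f ^ (j - 1) * (E * D) := Dvd.dvd.mul_left (hEdvd.mul_right D) _
    rw [PowerSeries.X_pow_dvd_iff] at hdvd
    apply hdvd
    have hT1 : 1 ≤ T := Nat.one_le_pow _ _ (by norm_num)
    have : (k + 1) * T ≤ (ℓ + 1) * T := Nat.mul_le_mul_right _ (by omega)
    omega
  rw [hzero, add_zero]
end

section
/- Let g, f be formal power series over ℤ/3ℤ with f(0) = 0, and let A be a power series over ℤ/3ℤ with A(0) ≠ 0 such that f = z·A(f). Write a_k = [z^k]A. Then for all integers i > j ≥ 4, one has [z^{i−2}] g f^{j−1} = Σ_{k=0}^{⌊(i−j−1)/3⌋} a_k · [z^{i−5}] g f^{j−4+3k}. -/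
open PowerSeries

/-- Let `g, f, A` be power series over `ℤ/3ℤ` with `f(0) = 0`, `A(0) ≠ 0` and
`f = z·A(f)`, and write `a k = [z^k]A`.  Then for all `i > j ≥ 4`,
`[z^{i−2}] g f^{j−1} = Σ_{k=0}^{⌊(i−j−1)/3⌋} a k · [z^{i−5}] g f^{j−4+3k}`. -/
theorem riordan_decomposition_recurrence (g f A : PowerSeries (ZMod 3))
    (hf : constantCoeff f = 0)
    (hA : constantCoeff A ≠ 0)
    (hfA : f = X * psComp A f)
    (i j : ℕ) (hj : 4 ≤ j) (hij : j < i) :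
    coeff (i - 2) (g * f ^ (j - 1)) =
      ∑ k ∈ Finset.range ((i - j - 1) / 3 + 1),
        coeff k A * coeff (i - 5) (g * f ^ (j - 4 + 3 * k)) := by
  haveI : Fact (Nat.Prime 3) := ⟨by norm_num⟩
  haveI : CharP (PowerSeries (ZMod 3)) 3 :=
    charP_of_injective_ringHom (f := (C : ZMod 3 →+* PowerSeries (ZMod 3)))
      (fun a b h => by simpa using congrArg (constantCoeff) h) 3
  haveI : ExpChar (PowerSeries (ZMod 3)) 3 := .prime (by norm_num)
  have hXf : (X : PowerSeries (ZMod 3)) ∣ f := X_dvd_iff.mpr hf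
  have hcoeff_pow : ∀ (n k : ℕ), n < k → coeff n (f ^ k) = 0 := fun n k hnk =>
    X_pow_dvd_iff.mp (pow_dvd_pow_of_dvd hXf k) n hnk
  set Q := psComp A f with hQ
  set P : PowerSeries (ZMod 3) :=
    ∑ k ∈ Finset.range (i + 1), C (coeff k A) * f ^ k with hP
  -- Q and P agree up to degree i
  have hQP : (X : PowerSeries (ZMod 3)) ^ (i + 1) ∣ Q - P := by
    rw [X_pow_dvd_iff]
    intro n hn
    rw [map_sub, sub_eq_zero]
    calc coeff n Q
        = ∑ k ∈ Finset.range (n + 1), coeff k A * coeff n (f ^ k) := by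
          rw [hQ, psComp, coeff_mk]
      _ = ∑ k ∈ Finset.range (i + 1), coeff k A * coeff n (f ^ k) := by
          refine Finset.sum_subset (Finset.range_subset_range.mpr (by omega)) fun x _ hx => ?_
          simp only [Finset.mem_range, not_lt] at hx
          rw [hcoeff_pow n x (by omega), mul_zero]
      _ = coeff n P := by
          rw [hP, map_sum]
          exact Finset.sum_congr rfl fun k _ => (coeff_C_mul _ _ _).symm
  -- step A: LHS = coeff (i-5) (g * f^(j-4) * Q^3)
  have hsplit : g * f ^ (j - 1) = X ^ 3 * (g * f ^ (j - 4) * Q ^ 3) := by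
    have h1 : f ^ (j - 1) = f ^ (j - 4) * f ^ 3 := by
      rw [← pow_add]; congr 1; omega
    have hf3 : f ^ 3 = X ^ 3 * Q ^ 3 := by rw [hfA]; ring
    rw [h1, hf3]; ring
  have hi5 : i - 2 = (i - 5) + 3 := by omega
  rw [hsplit, hi5, coeff_X_pow_mul]
  -- step B: replace Q^3 with P^3
  have hQP3 : coeff (i - 5) (g * f ^ (j - 4) * Q ^ 3)
      = coeff (i - 5) (g * f ^ (j - 4) * P ^ 3) := by
    rw [← sub_eq_zero, ← map_sub, ← mul_sub]
    have hd : (X : PowerSeries (ZMod 3)) ^ (i + 1) ∣ g * f ^ (j - 4) * (Q ^ 3 - P ^ 3) :=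
      Dvd.dvd.mul_left (hQP.trans (sub_dvd_pow_sub_pow Q P 3)) _
    exact X_pow_dvd_iff.mp hd (i - 5) (by omega)
  rw [hQP3]
  -- step C: P^3 via Frobenius
  have hP3 : P ^ 3 = ∑ k ∈ Finset.range (i + 1),
      C (coeff k A) * f ^ (3 * k) := by
    rw [hP, sum_pow_char]
    refine Finset.sum_congr rfl fun k _ => ?_
    rw [mul_pow, ← map_pow, ← pow_mul, ZMod.pow_card, Nat.mul_comm]
  rw [hP3, Finset.mul_sum, map_sum]
  -- step D: rearrange each term and shrink the sum
  have hterm : ∀ k, coeff (i - 5)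
        (g * f ^ (j - 4) * (C (coeff k A) * f ^ (3 * k)))
      = coeff k A * coeff (i - 5) (g * f ^ (j - 4 + 3 * k)) := by
    intro k
    rw [show g * f ^ (j - 4) * (C (coeff k A) * f ^ (3 * k))
        = C (coeff k A) * (g * f ^ (j - 4 + 3 * k)) by
          rw [pow_add]; ring,
      coeff_C_mul]
  calc (∑ k ∈ Finset.range (i + 1), coeff (i - 5)
          (g * f ^ (j - 4) * (C (coeff k A) * f ^ (3 * k))))
      = ∑ k ∈ Finset.range (i + 1),
          coeff k A * coeff (i - 5) (g * f ^ (j - 4 + 3 * k)) :=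
        Finset.sum_congr rfl fun k _ => hterm k
    _ = _ := by
        refine (Finset.sum_subset (Finset.range_subset_range.mpr (by omega)) fun k _ hk => ?_).symm
        simp only [Finset.mem_range, not_lt] at hk
        have hd : (X : PowerSeries (ZMod 3)) ^ (j - 4 + 3 * k) ∣ g * f ^ (j - 4 + 3 * k) :=
          Dvd.dvd.mul_left (pow_dvd_pow_of_dvd hXf _) g
        have hz : coeff (i - 5) (g * f ^ (j - 4 + 3 * k)) = 0 :=
          X_pow_dvd_iff.mp hd (i - 5) (by omega)
        rw [hz, mul_zero]
end

section
/- Let n ≥ 3, let g, f be formal power series over ℤ/3ℤ with f(0) = 0 admitting an A-sequence (there is A over ℤ/3ℤ with A(0) ≠ 0 and f = z·A(f)), let i ∈ {1,2,3}, and set ℓ_i = ⌊(n−i)/3⌋ + 1. Then the induced subgraph ⟨V_i⟩ of the oriented Riordan graph G_n^σ(g,f) is a null graph (has no arcs), i.e. [z^{3(u−1)+i−2}] g f^{3(v−1)+i−1} = 0 for all 1 ≤ v < u ≤ ℓ_i, if and only if [z^{3m+i−2}] g f^{i−1} = 0 for all integers m with 1 ≤ m ≤ ℓ_i − 1. -/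
open PowerSeries

instance inst_s11 : CharP (PowerSeries (ZMod 3)) 3 :=
  charP_of_injective_ringHom (f := C) (fun a b h => by
    simpa using congrArg (constantCoeff) h) 3

/-- Frobenius for power series over `ZMod 3`: the cube of a power series has
coefficients of the original series, spread out on multiples of 3. -/
lemma coeff_pow3 (f : PowerSeries (ZMod 3)) (n : ℕ) :
    coeff n (f ^ 3) = if 3 ∣ n then coeff (n / 3) f else 0 := by
  set T : Polynomial (ZMod 3) := trunc (n + 1) f with hT
  have hsplit : f = (T : PowerSeries (ZMod 3)) + (f - T) := by ring
  have h3 : f ^ 3 = (T : PowerSeries (ZMod 3)) ^ 3 + (f - T) ^ 3 := by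
    conv_lhs => rw [hsplit]
    exact add_pow_char _ _ 3
  have hr : (X : PowerSeries (ZMod 3)) ^ (n + 1) ∣ f - (T : PowerSeries (ZMod 3)) := by
    rw [X_pow_dvd_iff]
    intro m hm
    simp [map_sub, Polynomial.coeff_coe, hT, coeff_trunc, hm]
  have hr3 : coeff n ((f - (T : PowerSeries (ZMod 3))) ^ 3) = 0 := by
    have : (X : PowerSeries (ZMod 3)) ^ ((n + 1) * 3) ∣ (f - T) ^ 3 := by
      rw [pow_mul]
      exact pow_dvd_pow_of_dvd hr 3
    exact (X_pow_dvd_iff.mp this) n (by omega)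
  have hTpow : (T : PowerSeries (ZMod 3)) ^ 3 = ((T ^ 3 : Polynomial (ZMod 3)) : PowerSeries (ZMod 3)) := by
    push_cast; ring
  have hexp : T ^ 3 = Polynomial.expand (ZMod 3) 3 T := by
    have := Polynomial.map_frobenius_expand 3 T
    rwa [ZMod.frobenius_zmod, Polynomial.map_id, eq_comm] at this
  rw [h3, map_add, hr3, add_zero, hTpow, Polynomial.coeff_coe, hexp,
    Polynomial.coeff_expand (by norm_num)]
  split_ifs with h
  · rw [hT, coeff_trunc]
    rw [if_pos (by omega)]
  · rfl

/-- For `n ≥ 3` and `i ∈ {1,2,3}`, with `ℓ_i = ⌊(n−i)/3⌋ + 1`, the induced subgraph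
`⟨V_i⟩` of the oriented Riordan graph `G_n^σ(g,f)` is a null graph (all entries of
its skew-adjacency matrix vanish) if and only if `[z^{3m+i−2}] g f^{i−1} = 0` for all
`1 ≤ m ≤ ℓ_i − 1`. -/
theorem induced_subgraph_null_iff (n : ℕ) (hn : 3 ≤ n)
    (g f A : PowerSeries (ZMod 3))
    (hf : constantCoeff f = 0)
    (hA : constantCoeff A ≠ 0)
    (hfA : f = X * psComp A f)
    (i : ℕ) (hi : i = 1 ∨ i = 2 ∨ i = 3) :
    (∀ u v : ℕ, 1 ≤ v → v < u → u ≤ (n - i) / 3 + 1 →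
        coeff (3 * (u - 1) + i - 2) (g * f ^ (3 * (v - 1) + i - 1)) = 0) ↔
    (∀ m : ℕ, 1 ≤ m → m ≤ (n - i) / 3 →
        coeff (3 * m + i - 2) (g * f ^ (i - 1)) = 0) := by
  have hi1 : 1 ≤ i := by omega
  constructor
  · intro H m hm1 hm2
    have := H (m + 1) 1 le_rfl (by omega) (by omega)
    have e1 : 3 * (m + 1 - 1) + i - 2 = 3 * m + i - 2 := by omega
    have e2 : 3 * (1 - 1) + i - 1 = i - 1 := by omega
    rwa [e1, e2] at this
  · intro H u v hv huv hu
    have hu2 : 2 ≤ u := by omega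
    -- rewrite the exponent
    have hexp : 3 * (v - 1) + i - 1 = (i - 1) + (v - 1) * 3 := by omega
    have hfac : g * f ^ ((i - 1) + (v - 1) * 3) = (g * f ^ (i - 1)) * (f ^ (v - 1)) ^ 3 := by
      rw [pow_add, pow_mul]; ring
    rw [hexp, hfac, coeff_mul]
    apply Finset.sum_eq_zero
    rintro ⟨a, b⟩ hab
    rw [Finset.HasAntidiagonal.mem_antidiagonal] at hab
    rw [coeff_pow3]
    split_ifs with h3
    · obtain ⟨k, rfl⟩ := h3
      -- a + 3*k = 3*(u-1) + i - 2
      by_cases hm : k + 1 ≤ u - 1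
      · -- a = 3*m + i - 2 with m = u - 1 - k ≥ 1
        set m := u - 1 - k with hmdef
        have ha : a = 3 * m + i - 2 := by omega
        rw [ha, H m (by omega) (by omega), zero_mul]
      · -- then k ≥ u - 1; since a + 3k = 3(u-1)+i-2 and i ≤ 3, forces k = u-1, a = i-2
        have hi2 : i = 2 ∨ i = 3 := by omega
        have ha : a = i - 2 := by omega
        -- first factor vanishes since X^(i-1) ∣ g * f^(i-1) and a < i - 1
        have hXf : (X : PowerSeries (ZMod 3)) ∣ f := X_dvd_iff.mpr hf
        have hdvd : (X : PowerSeries (ZMod 3)) ^ (i - 1) ∣ g * f ^ (i - 1) :=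
          Dvd.dvd.mul_left (pow_dvd_pow_of_dvd hXf (i - 1)) g
        have : coeff a (g * f ^ (i - 1)) = 0 :=
          (X_pow_dvd_iff.mp hdvd) a (by omega)
        rw [this, zero_mul]
    · rw [mul_zero]
end

section
/- Let n ≥ 3, let g, f be formal power series over ℤ/3ℤ with f(0) = 0 admitting an A-sequence (there is A over ℤ/3ℤ with A(0) ≠ 0 and f = z·A(f)), and let 1 ≤ i < j ≤ 3. Then in the oriented Riordan graph G_n^σ(g,f) there are no arcs between any vertex u ∈ V_i and any vertex v ∈ V_j (i.e. for all u ∈ V_i, v ∈ V_j one has [z^{max(u,v)−2}] g f^{min(u,v)−1} = 0) if and only if both: [z^{3m+i−2}] g f^{j−1} = 0 for all integers m ≥ 1 with 3m+i ≤ n, and [z^{3(m−1)+j−2}] g f^{i−1} = 0 for all integers m ≥ 1 with 3(m−1)+j ≤ n. -/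
open PowerSeries

/-- Over `ZMod 3`, the coefficient of `φ^3` at an index not divisible by `3` vanishes
(Frobenius). -/
lemma cube_coeff_eq_zero (φ : PowerSeries (ZMod 3)) (q : ℕ) (hq : ¬ 3 ∣ q) :
    coeff q (φ ^ 3) = 0 := by
  have h1 : coeff q (φ ^ 3)
      = coeff q ((trunc (q+1) ((trunc (q+1) φ : PowerSeries (ZMod 3)) ^ 3) :
          Polynomial (ZMod 3)) : PowerSeries (ZMod 3)) := by
    rw [trunc_trunc_pow, coeff_coe_trunc_of_lt (Nat.lt_succ_self q)]
  rw [h1, coeff_coe_trunc_of_lt (Nat.lt_succ_self q), ← Polynomial.coe_pow,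
    Polynomial.coeff_coe]
  rw [← Polynomial.map_frobenius_expand 3, Polynomial.coeff_map,
    Polynomial.coeff_expand (by norm_num : 0 < 3), if_neg hq, map_zero]

/-- If `f = X * h` then `g * f^K` has order at least `K`. -/
lemma coeff_lt_order_eq_zero (g h : PowerSeries (ZMod 3)) (N K : ℕ) (hNK : N < K) :
    coeff N (g * (X * h) ^ K) = 0 := by
  have : g * (X * h) ^ K = (g * h ^ K) * X ^ K := by ring
  rw [this, coeff_mul_X_pow', if_neg (by omega)]

/-- Key reduction step: `coeff N (g f^{k+3})` is a combination of `coeff (N-3s) (g f^k)`. -/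
lemma step_lemma (g h : PowerSeries (ZMod 3)) (f : PowerSeries (ZMod 3))
    (hfh : f = X * h) (N k : ℕ)
    (hterm : ∀ s : ℕ, 1 ≤ s → 3 * s ≤ N → k ≤ N - 3 * s →
        coeff (N - 3 * s) (g * f ^ k) = 0) :
    coeff N (g * f ^ (k + 3)) = 0 := by
  have h0 : g * f ^ (k + 3) = (g * f ^ k) * f ^ 3 := by ring
  rw [h0, coeff_mul]
  apply Finset.sum_eq_zero
  intro p hp
  rw [Finset.HasAntidiagonal.mem_antidiagonal] at hp
  by_cases h3 : 3 ∣ p.2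
  · obtain ⟨s, hs⟩ := h3
    rcases Nat.eq_zero_or_pos s with rfl | hs1
    · have hc : coeff p.2 (f ^ 3) = 0 := by
        rw [hs, coeff_zero_eq_constantCoeff, map_pow, hfh, map_mul, constantCoeff_X,
          zero_mul, zero_pow (by norm_num)]
      rw [hc, mul_zero]
    · by_cases hk : k ≤ p.1
      · have := hterm s hs1 (by omega) (by omega)
        rw [show p.1 = N - 3 * s by omega, this, zero_mul]
      · rw [hfh, coeff_lt_order_eq_zero g h p.1 k (by omega), zero_mul]
  · rw [cube_coeff_eq_zero f p.2 h3, mul_zero]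

/-- For `n ≥ 3` and `1 ≤ i < j ≤ 3`, there are no arcs in `G_n^σ(g,f)` between any
vertex `u ∈ V_i` and any vertex `v ∈ V_j` (i.e. for all such `u, v` one has
`[z^{max(u,v)−2}] g f^{min(u,v)−1} = 0`) if and only if both
`[z^{3m+i−2}] g f^{j−1} = 0` for all `m ≥ 1` with `3m+i ≤ n`, and
`[z^{3(m−1)+j−2}] g f^{i−1} = 0` for all `m ≥ 1` with `3(m−1)+j ≤ n`. -/
theorem no_arcs_between_parts_iff (n : ℕ) (hn : 3 ≤ n)
    (g f A : PowerSeries (ZMod 3))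
    (hf : constantCoeff f = 0)
    (hA : constantCoeff A ≠ 0)
    (hfA : f = X * psComp A f)
    (i j : ℕ) (hi : 1 ≤ i) (hij : i < j) (hj : j ≤ 3) :
    (∀ u v : ℕ, 1 ≤ u → u ≤ n → 1 ≤ v → v ≤ n → u % 3 = i % 3 → v % 3 = j % 3 →
        coeff (max u v - 2) (g * f ^ (min u v - 1)) = 0) ↔
    ((∀ m : ℕ, 1 ≤ m → 3 * m + i ≤ n →
        coeff (3 * m + i - 2) (g * f ^ (j - 1)) = 0) ∧
     (∀ m : ℕ, 1 ≤ m → 3 * (m - 1) + j ≤ n →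
        coeff (3 * (m - 1) + j - 2) (g * f ^ (i - 1)) = 0)) := by
  constructor
  · intro H
    constructor
    · intro m hm hmn
      have := H (3 * m + i) j (by omega) hmn (by omega) (by omega) (by omega) rfl
      rwa [show max (3 * m + i) j = 3 * m + i by omega, show min (3 * m + i) j = j by omega]
        at this
    · intro m hm hmn
      have := H i (3 * (m - 1) + j) hi (by omega) (by omega) hmn rfl (by omega)
      rwa [show max i (3 * (m - 1) + j) = 3 * (m - 1) + j by omega,
        show min i (3 * (m - 1) + j) = i by omega] at this
  · rintro ⟨H1, H2⟩
    suffices H : ∀ N u v : ℕ, u + v = N → 1 ≤ u → u ≤ n → 1 ≤ v → v ≤ n →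
        u % 3 = i % 3 → v % 3 = j % 3 →
        coeff (max u v - 2) (g * f ^ (min u v - 1)) = 0 by
      intro u v hu1 hun hv1 hvn hui hvj
      exact H (u + v) u v rfl hu1 hun hv1 hvn hui hvj
    intro N
    induction N using Nat.strong_induction_on with
    | _ N IH =>
      intro u v hN hu1 hun hv1 hvn hui hvj
      have huv : u ≠ v := by omega
      rcases lt_or_gt_of_ne huv with hlt | hgt
      · -- u < v, max = v, min = u
        rw [show max u v = v by omega, show min u v = u by omega]
        by_cases hu3 : u ≤ 3
        · -- u = i
          have hu : u = i := by omega
          obtain ⟨m, hm1, hmv⟩ : ∃ m, 1 ≤ m ∧ v = 3 * (m - 1) + j :=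
            ⟨(v - j) / 3 + 1, by omega, by omega⟩
          rw [hu, hmv]
          exact H2 m hm1 (by omega)
        · -- u ≥ 4
          rw [show u - 1 = (u - 4) + 3 by omega]
          apply step_lemma g (psComp A f) f hfA
          intro s hs1 hsN hk
          have hv' : v - 3 * s ≥ u - 2 := by omega
          have := IH ((u - 3) + (v - 3 * s)) (by omega) (u - 3) (v - 3 * s) rfl
            (by omega) (by omega) (by omega) (by omega) (by omega) (by omega)
          rw [show max (u - 3) (v - 3 * s) = v - 3 * s by omega,
            show min (u - 3) (v - 3 * s) = u - 3 by omega] at this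
          rw [show v - 2 - 3 * s = v - 3 * s - 2 by omega,
            show u - 4 = u - 3 - 1 by omega]
          exact this
      · -- u > v, max = u, min = v
        rw [show max u v = u by omega, show min u v = v by omega]
        by_cases hv3 : v ≤ 3
        · -- v = j
          have hv : v = j := by omega
          obtain ⟨m, hm1, hmu⟩ : ∃ m, 1 ≤ m ∧ u = 3 * m + i :=
            ⟨(u - i) / 3, by omega, by omega⟩
          rw [hv, hmu]
          exact H1 m hm1 (by omega)
        · -- v ≥ 4
          rw [show v - 1 = (v - 4) + 3 by omega]
          apply step_lemma g (psComp A f) f hfA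
          intro s hs1 hsN hk
          have hu' : u - 3 * s ≥ v - 2 := by omega
          have := IH ((u - 3 * s) + (v - 3)) (by omega) (u - 3 * s) (v - 3) rfl
            (by omega) (by omega) (by omega) (by omega) (by omega) (by omega)
          rw [show max (u - 3 * s) (v - 3) = u - 3 * s by omega,
            show min (u - 3 * s) (v - 3) = v - 3 by omega] at this
          rw [show u - 2 - 3 * s = u - 3 * s - 2 by omega,
            show v - 4 = v - 3 - 1 by omega]
          exact this
end

section
/- Let g be a formal power series over ℤ/3ℤ with g(0) ≠ 0, and consider the proper oriented Riordan graph of Bell type G_n^σ(g, zg). Then the induced subgraph ⟨V_3⟩ is a null graph; explicitly, for all integers u > v ≥ 1 with u ≡ 0 (mod 3) and v ≡ 0 (mod 3), one has [z^{u−2}] g·(zg)^{v−1} = 0 in ℤ/3ℤ. -/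
open PowerSeries

lemma coeff_cube_eq_zero (h : PowerSeries (ZMod 3)) (n : ℕ) (hn : ¬ 3 ∣ n) :
    coeff n (h ^ 3) = 0 := by
  set q : Polynomial (ZMod 3) := trunc (n + 1) h with hq
  have key : (trunc (n + 1) ((q : PowerSeries (ZMod 3)) ^ 3)).coeff n =
      (trunc (n + 1) (h ^ 3)).coeff n := by rw [hq, trunc_trunc_pow]
  simp only [coeff_trunc, if_pos (Nat.lt_succ_self n)] at key
  rw [← key]
  have h2 : ((q : PowerSeries (ZMod 3)) ^ 3) = ((q ^ 3 : Polynomial (ZMod 3)) :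
      PowerSeries (ZMod 3)) := by push_cast; ring
  rw [h2, Polynomial.coeff_coe, ← Polynomial.map_frobenius_expand (p := 3) q, Polynomial.coeff_map,
    Polynomial.coeff_expand (by norm_num : 0 < 3), if_neg hn, map_zero]

lemma coeff_pow_mul_three (h : PowerSeries (ZMod 3)) (k n : ℕ) (hn : ¬ 3 ∣ n) :
    coeff n (h ^ (3 * k)) = 0 := by
  rw [mul_comm, pow_mul]
  exact coeff_cube_eq_zero (h ^ k) n hn

/-- For a proper oriented Riordan graph of Bell type `G_n^σ(g, zg)` (i.e. `g(0) ≠ 0`),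
the induced subgraph `⟨V_3⟩` is a null graph: for all `u > v ≥ 1` with
`u ≡ 0 (mod 3)` and `v ≡ 0 (mod 3)`, one has `[z^{u−2}] g·(zg)^{v−1} = 0`. -/
theorem bell_type_V3_null (g : PowerSeries (ZMod 3))
    (hg : constantCoeff g ≠ 0)
    (u v : ℕ) (hv : 1 ≤ v) (huv : v < u) (hu3 : u % 3 = 0) (hv3 : v % 3 = 0) :
    coeff (u - 2) (g * (X * g) ^ (v - 1)) = 0 := by
  have hv3' : 3 ≤ v := by omega
  have hu3' : v + 3 ≤ u := by omega
  have hgp : g ^ v = g ^ (v - 1) * g := by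
    rw [← pow_succ]; congr 1; omega
  have key : g * (X * g) ^ (v - 1) = X ^ (v - 1) * g ^ v := by
    rw [mul_pow, hgp]; ring
  rw [key, coeff_X_pow_mul' ]
  rw [if_pos (by omega)]
  have hvd : 3 ∣ v := Nat.dvd_of_mod_eq_zero hv3
  obtain ⟨k, hk⟩ := hvd
  rw [hk]
  apply coeff_pow_mul_three
  omega
end

section
/- Let g be a formal power series over ℤ/3ℤ with g(0) ≠ 0. Then the oriented Riordan graph of Bell type G_n^σ(g, zg) is i1-decomposable — that is, (C1) [z^{3u−4}] g·(zg)^{3(v−1)} = [z^{u−2}] g·(zg)^{v−1} for all integers u > v ≥ 1 (⟨V_1⟩ is isomorphic to G^σ(g,zg)), (C2) [z^{3u−3}] g·(zg)^{3v−2} = 0 for all integers u > v ≥ 1 (⟨V_2⟩ is null), and (C3) [z^{3u−2}] g·(zg)^{3v−1} = 0 for all integers u > v ≥ 1 (⟨V_3⟩ is null) — if and only if g′ = g² or g′ = −g², where g′ denotes the formal derivative of g. -/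
open PowerSeries

noncomputable section RiordanAux

private abbrev R3 := ZMod 3
private abbrev PS := PowerSeries R3

private lemma ps3 : (3 : PS) = 0 := by
  have h := (map_natCast (C (R := R3)) 3).symm
  have : ((3:ℕ) : R3) = 0 := by decide
  rw [this, map_zero] at h
  exact_mod_cast h

private lemma coeff_cube (f : PS) (n : ℕ) :
    coeff n (f^3) = if 3 ∣ n then coeff (n/3) f else 0 := by
  classical
  set P : Polynomial R3 := trunc (n+1) f with hP
  have hdvd : (X : PS)^(n+1) ∣ f - (P : PS) := by
    rw [X_pow_dvd_iff]
    intro m hm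
    simp [hP, Polynomial.coeff_coe, coeff_trunc, hm]
  have h1 : coeff n (f^3) = coeff n ((P : PS)^3) := by
    have hd3 : (X : PS)^(n+1) ∣ f^3 - (P:PS)^3 := by
      obtain ⟨r, hr⟩ := hdvd
      exact ⟨r * (f^2 + f*(P:PS) + (P:PS)^2),
        by linear_combination (f^2 + f*(P:PS) + (P:PS)^2) * hr⟩
    have h0 := (X_pow_dvd_iff.mp hd3) n (lt_add_one n)
    rw [map_sub] at h0
    exact sub_eq_zero.mp h0
  have h2 : (P^3 : Polynomial R3) = Polynomial.expand R3 3 P := by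
    have := Polynomial.map_frobenius_expand (p := 3) (R := R3) P
    rw [ZMod.frobenius_zmod, Polynomial.map_id] at this
    exact this.symm
  rw [h1, ← Polynomial.coe_pow, Polynomial.coeff_coe, h2,
    Polynomial.coeff_expand (by norm_num)]
  split_ifs with h
  · rw [hP, coeff_trunc]
    have : n / 3 < n + 1 := lt_of_le_of_lt (Nat.div_le_self n 3) (lt_add_one n)
    simp [this]
  · rfl

private lemma coeff_cube_3mul (f : PS) (n : ℕ) : coeff (3*n) (f^3) = coeff n f := by
  rw [coeff_cube]
  simp [Nat.mul_div_cancel_left n (by norm_num : 0 < 3)]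

private lemma coeff_cube_ne (f : PS) (n : ℕ) (h : ¬ 3 ∣ n) : coeff n (f^3) = 0 := by
  rw [coeff_cube, if_neg h]

private lemma cube_inj {f h : PS} (e : f^3 = h^3) : f = h := by
  ext n
  have := congrArg (coeff (3*n)) e
  rwa [coeff_cube_3mul, coeff_cube_3mul] at this

/-- section operator: coefficients along an arithmetic progression mod 3 -/
private def sec (i : ℕ) (f : PS) : PS := PowerSeries.mk fun n => coeff (3*n+i) f

private lemma coeff_sec (i n : ℕ) (f : PS) : coeff n (sec i f) = coeff (3*n+i) f := by
  simp [sec]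

private lemma m1 (h : PS) (n : ℕ) : coeff (3*n+2) (h^3) = 0 :=
  coeff_cube_ne h _ (by omega)

private lemma m2 (h : PS) (n : ℕ) : coeff (3*n+2) (X * h^3) = 0 := by
  rw [show 3*n+2 = (3*n+1)+1 by ring, coeff_succ_X_mul]
  exact coeff_cube_ne h _ (by omega)

private lemma m3 (h : PS) (n : ℕ) : coeff (3*n+2) (X^2 * h^3) = coeff n h := by
  rw [show 3*n+2 = (3*n)+2 by ring, coeff_X_pow_mul, coeff_cube_3mul]

private lemma m0a (h : PS) (n : ℕ) : coeff (3*n) (X * h^3) = 0 := by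
  rcases Nat.eq_zero_or_pos n with rfl | hn
  · simp
  · rw [show 3*n = (3*(n-1)+2)+1 by omega, coeff_succ_X_mul]
    exact coeff_cube_ne h _ (by omega)

private lemma m0b (h : PS) (n : ℕ) : coeff (3*n) (X^2 * h^3) = 0 := by
  rcases Nat.eq_zero_or_pos n with rfl | hn
  · rw [coeff_X_pow_mul', if_neg (by omega)]
  · rw [coeff_X_pow_mul', if_pos (by omega)]
    exact coeff_cube_ne h _ (by omega)

private lemma m1b (h : PS) (n : ℕ) : coeff (3*n+1) (X * h^3) = coeff n h := by
  rw [show 3*n+1 = (3*n)+1 by ring, coeff_succ_X_mul, coeff_cube_3mul]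

private lemma m1c (h : PS) (n : ℕ) : coeff (3*n+1) (X^2 * h^3) = 0 := by
  rcases Nat.eq_zero_or_pos n with rfl | hn
  · rw [coeff_X_pow_mul', if_neg (by omega)]
  · rw [coeff_X_pow_mul', if_pos (by omega)]
    exact coeff_cube_ne h _ (by omega)

/-- decomposition of a power series into its three sections -/
private lemma decomp (f : PS) :
    f = (sec 0 f)^3 + X * (sec 1 f)^3 + X^2 * (sec 2 f)^3 := by
  ext n
  rcases (show n % 3 = 0 ∨ n % 3 = 1 ∨ n % 3 = 2 by omega) with h | h | h
  · obtain ⟨q, rfl⟩ : ∃ q, n = 3*q := ⟨n/3, by omega⟩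
    rw [map_add, map_add, coeff_cube_3mul, coeff_sec, m0a, m0b]
    simp
  · obtain ⟨q, rfl⟩ : ∃ q, n = 3*q+1 := ⟨n/3, by omega⟩
    rw [map_add, map_add, coeff_cube_ne _ _ (by omega), m1b, m1c, coeff_sec]
    simp
  · obtain ⟨q, rfl⟩ : ∃ q, n = 3*q+2 := ⟨n/3, by omega⟩
    rw [map_add, map_add, coeff_cube_ne _ _ (by omega), m2, m3, coeff_sec]
    simp

/-- the key section-extraction lemma -/
private lemma Lsec (f h : PS) (t : ℕ) :
    coeff (3*t+2) (f * h^3) = coeff t (sec 2 f * h) := by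
  have e : f * h^3 = ((sec 0 f)*h)^3 + X * ((sec 1 f)*h)^3 + X^2 * ((sec 2 f)*h)^3 := by
    rw [mul_pow, mul_pow, mul_pow]
    nth_rewrite 1 [decomp f]
    ring
  rw [e, map_add, map_add, m1, m2, m3]
  simp

private lemma dmul (f h : PS) : d⁄dX R3 (f * h) = f * d⁄dX R3 h + h * d⁄dX R3 f := by
  simpa [smul_eq_mul] using Derivation.leibniz (d⁄dX R3) f h

private lemma dcube (f : PS) : d⁄dX R3 (f^3) = 0 := by
  rw [show f^3 = f*(f*f) by ring, dmul, dmul]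
  linear_combination (f*f*(d⁄dX R3 f)) * ps3

private lemma dXmul (h : PS) : d⁄dX R3 (X * h^3) = h^3 := by
  rw [dmul, dcube, derivative_X]
  ring

private lemma dX2mul (h : PS) : d⁄dX R3 (X^2 * h^3) = 2 * X * h^3 := by
  rw [dmul, dcube, show (X:PS)^2 = X*X by ring, dmul, derivative_X]
  ring

private lemma star (f : PS) :
    sec 2 (f*f) = sec 1 f * sec 1 f + 2 * (sec 0 f * sec 2 f) := by
  set A := sec 0 f; set B := sec 1 f; set Cc := sec 2 f
  have hD : f = A^3 + X*B^3 + X^2*Cc^3 := decomp f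
  have h6 : f*f = (A*A)^3 + X*(2*A*B)^3 + X^2*(B*B)^3 + (X*(2*B*Cc))^3
      + X*(X*(Cc*Cc))^3 + X^2*(2*(A*Cc))^3 := by
    linear_combination (f + (A^3 + X*B^3 + X^2*Cc^3))*hD -
      (2*X*A^3*B^3 + 2*X^3*B^3*Cc^3 + 2*X^2*A^3*Cc^3)*ps3
  ext n
  rw [coeff_sec, h6, map_add, map_add, map_add, map_add, map_add,
    m1, m2, m3, m1, m2, m3]
  simp

private lemma decomp_deriv (g : PS) :
    d⁄dX R3 g = (sec 1 g)^3 + 2*X*(sec 2 g)^3 := by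
  conv_lhs => rw [decomp g]
  rw [map_add, map_add, dcube, dXmul, dX2mul]
  ring

private lemma fwd (g : PS) (hC : sec 2 g = g) (h2 : sec 2 (g*g) = 0) :
    d⁄dX R3 g = g^2 ∨ d⁄dX R3 g = -g^2 := by
  set A := sec 0 g with hA; set B := sec 1 g with hB
  have e : (0:PS) = B*B + 2*(A*g) := by rw [← h2, star g, hC]
  have hBB : B*B = A*g := by linear_combination (-1)*e - (A*g)*ps3
  have hD : g = A^3 + X*B^3 + X^2*g^3 := by
    have := decomp g; rwa [hC] at this
  have hc : (B*B)^3 = (A*g)^3 := by rw [hBB]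
  have h4 : g^4 = B^6 + X*B^3*g^3 + X^2*g^6 := by
    linear_combination g^3*hD - hc
  have key : (B^3 - g^2 - X*g^3) * (B^3 + g^2 - X*g^3) = 0 := by
    linear_combination (-1)*h4 - (X*B^3*g^3)*ps3
  have hd' : d⁄dX R3 g = B^3 + 2*X*g^3 := by
    rw [decomp_deriv g, hC, hB]
  rcases mul_eq_zero.mp key with h | h
  · left; rw [hd']; linear_combination h + (X*g^3)*ps3
  · right; rw [hd']; linear_combination h + (X*g^3)*ps3

private lemma bwd (g : PS) (ε : R3) (hε : ε*ε = 1)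
    (hd : d⁄dX R3 g = (C ε) * g^2) :
    sec 2 g = g ∧ sec 2 (g*g) = 0 := by
  set B := sec 1 g with hB; set Cc := sec 2 g with hCc
  have hCε : (C ε) * (C ε) = 1 := by rw [← map_mul, hε, map_one]
  have hd' : d⁄dX R3 g = B^3 + 2*X*Cc^3 := decomp_deriv g
  have hdd1 : d⁄dX R3 (d⁄dX R3 g) = 2 * Cc^3 := by
    rw [hd', show B^3 + 2*X*Cc^3 = B^3 + (X*Cc^3 + X*Cc^3) by ring,
      map_add, map_add, dcube, dXmul]
    ring
  have hdd2 : d⁄dX R3 (d⁄dX R3 g) = 2 * g^3 := by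
    conv_lhs => rw [hd]
    rw [dmul, show (g:PS)^2 = g*g by ring, dmul, hd]
    have : d⁄dX R3 (C ε) = 0 := derivative_C (r := ε)
    rw [this]
    linear_combination (2*g^3)*hCε
  have hCg : Cc = g := by
    apply cube_inj
    have h23 : 2*Cc^3 = 2*g^3 := by rw [← hdd1, hdd2]
    linear_combination 2*h23 + (g^3 - Cc^3)*ps3
  refine ⟨hCg, ?_⟩
  have hggd : g*g = (C ε) * d⁄dX R3 g := by
    rw [hd]; linear_combination (-(g^2))*hCε
  ext n
  rw [coeff_sec, hggd, coeff_C_mul, coeff_derivative]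
  have h0 : ((3*n+2 : ℕ) : R3) + 1 = 0 := by
    rw [show ((3*n+2:ℕ):R3) + 1 = ((3*n+2+1 : ℕ) : R3) by push_cast; ring,
      ZMod.natCast_eq_zero_iff]
    omega
  rw [h0, mul_zero, mul_zero]
  simp

/-- the two section conditions imply all three families of graph conditions -/
private lemma conds_of_sec (g : PS) (hsg : sec 2 g = g) (hsgg : sec 2 (g*g) = 0) :
    (∀ u v : ℕ, 1 ≤ v → v < u →
        coeff (3 * u - 4) (g * (X * g) ^ (3 * (v - 1))) =
          coeff (u - 2) (g * (X * g) ^ (v - 1))) ∧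
    (∀ u v : ℕ, 1 ≤ v → v < u →
        coeff (3 * u - 3) (g * (X * g) ^ (3 * v - 2)) = 0) ∧
    (∀ u v : ℕ, 1 ≤ v → v < u →
        coeff (3 * u - 2) (g * (X * g) ^ (3 * v - 1)) = 0) := by
  refine ⟨?_, ?_, ?_⟩
  · intro u v hv huv
    obtain ⟨m, rfl⟩ : ∃ m, v = m+1 := ⟨v-1, by omega⟩
    obtain ⟨t, rfl⟩ : ∃ t, u = t+m+2 := ⟨u-m-2, by omega⟩
    rw [show 3*(t+m+2)-4 = (3*t+2)+3*m by omega, show (t+m+2)-2 = t+m by omega,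
      show (m+1)-1 = m by omega]
    rw [show g * (X*g)^(3*m) = X^(3*m) * (g * (g^m)^3) by ring,
      show g * (X*g)^m = X^m * (g * g^m) by ring,
      coeff_X_pow_mul, coeff_X_pow_mul, Lsec, hsg]
  · intro u v hv huv
    obtain ⟨m, rfl⟩ : ∃ m, v = m+1 := ⟨v-1, by omega⟩
    obtain ⟨t, rfl⟩ : ∃ t, u = t+m+2 := ⟨u-m-2, by omega⟩
    rw [show 3*(t+m+2)-3 = (3*t+2)+(3*m+1) by omega, show 3*(m+1)-2 = 3*m+1 by omega]
    rw [show g * (X*g)^(3*m+1) = X^(3*m+1) * ((g*g) * (g^m)^3) by ring,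
      coeff_X_pow_mul, Lsec, hsgg, zero_mul, map_zero]
  · intro u v hv huv
    obtain ⟨m, rfl⟩ : ∃ m, v = m+1 := ⟨v-1, by omega⟩
    obtain ⟨t, rfl⟩ : ∃ t, u = t+m+2 := ⟨u-m-2, by omega⟩
    rw [show 3*(t+m+2)-2 = (3*t+2)+(3*m+2) by omega, show 3*(m+1)-1 = 3*m+2 by omega]
    rw [show g * (X*g)^(3*m+2) = X^(3*m+2) * (g^(m+1))^3 by ring,
      coeff_X_pow_mul, m1]

end RiordanAux

/-- The oriented Riordan graph of Bell type `G_n^σ(g, zg)` (with `g(0) ≠ 0`) is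
i1-decomposable — i.e. (C1) `⟨V_1⟩ ≅ G^σ(g,zg)`:
`[z^{3u−4}] g(zg)^{3(v−1)} = [z^{u−2}] g(zg)^{v−1}` for all `u > v ≥ 1`;
(C2) `⟨V_2⟩` is null: `[z^{3u−3}] g(zg)^{3v−2} = 0` for all `u > v ≥ 1`; and
(C3) `⟨V_3⟩` is null: `[z^{3u−2}] g(zg)^{3v−1} = 0` for all `u > v ≥ 1` —
if and only if `g′ = g²` or `g′ = −g²`. -/
theorem bell_type_i1_decomposable_iff (g : PowerSeries (ZMod 3))
    (hg : constantCoeff g ≠ 0) :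
    ((∀ u v : ℕ, 1 ≤ v → v < u →
        coeff (3 * u - 4) (g * (X * g) ^ (3 * (v - 1))) =
          coeff (u - 2) (g * (X * g) ^ (v - 1))) ∧
     (∀ u v : ℕ, 1 ≤ v → v < u →
        coeff (3 * u - 3) (g * (X * g) ^ (3 * v - 2)) = 0) ∧
     (∀ u v : ℕ, 1 ≤ v → v < u →
        coeff (3 * u - 2) (g * (X * g) ^ (3 * v - 1)) = 0)) ↔
    (d⁄dX (ZMod 3) g = g ^ 2 ∨ d⁄dX (ZMod 3) g = -g ^ 2) := by
  constructor
  · rintro ⟨h1, h2, -⟩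
    apply fwd
    · ext n
      have := h1 (n+2) 1 le_rfl (by omega)
      rw [show 3*(n+2)-4 = 3*n+2 by omega, show (n+2)-2 = n by omega] at this
      simpa [coeff_sec] using this
    · ext n
      have := h2 (n+2) 1 le_rfl (by omega)
      rw [show 3*(n+2)-3 = (3*n+2)+1 by omega, show 3*1-2 = 1 by omega, pow_one,
        show g * (X*g) = X * (g*g) by ring, coeff_succ_X_mul] at this
      simpa [coeff_sec] using this
  · intro h
    have hsec : sec 2 g = g ∧ sec 2 (g*g) = 0 := by
      rcases h with h | h
      · exact bwd g 1 (by decide) (by rw [map_one, one_mul]; exact h)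
      · exact bwd g (-1) (by decide) (by rw [map_neg, map_one]; rw [h]; ring)
    exact conds_of_sec g hsec.1 hsec.2
end

section
/- Let g be a formal power series over ℤ/3ℤ, and let A be a power series over ℤ/3ℤ with [z^0]A = 1 such that g = A(zg) (so A generates the ternary A-sequence (a_0, a_1, a_2, …) of the Riordan array (g, zg), a_k = [z^k]A). Then the oriented Riordan graph G_n^σ(g,zg) is i1-decomposable (equivalently, g′ = g² or g′ = −g²) if and only if either a_{3k+1} = a_{3k} and a_{3k+2} = 0 for all k ≥ 0 (A-sequence of the form (1,1,0,a₃,a₃,0,a₆,a₆,0,…)), or a_{3k+1} = −a_{3k} and a_{3k+2} = 0 for all k ≥ 0 (A-sequence of the form (1,−1,0,a₃,−a₃,0,a₆,−a₆,0,…)). -/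
open PowerSeries

section PsCompLemmas

variable {R : Type*} [CommRing R]

private lemma coeff_psComp (A f : PowerSeries R) (n : ℕ) :
    coeff n (psComp A f) = ∑ k ∈ Finset.range (n + 1), coeff k A * coeff n (f ^ k) :=
  coeff_mk _ _

private lemma coeff_pow_eq_zero' {f : PowerSeries R} (hf : constantCoeff f = 0)
    {n k : ℕ} (h : n < k) : coeff n (f ^ k) = 0 :=
  X_pow_dvd_iff.mp (pow_dvd_pow_of_dvd (X_dvd_iff.mpr hf) k) n h

private lemma psComp_add (P Q f : PowerSeries R) :
    psComp (P + Q) f = psComp P f + psComp Q f := by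
  ext n
  simp [coeff_psComp, add_mul, Finset.sum_add_distrib]

private lemma psComp_sub (P Q f : PowerSeries R) :
    psComp (P - Q) f = psComp P f - psComp Q f := by
  ext n
  simp [coeff_psComp, sub_mul, Finset.sum_sub_distrib]

private lemma psComp_C_mul (a : R) (P f : PowerSeries R) :
    psComp (C a * P) f = C a * psComp P f := by
  ext n
  simp [coeff_psComp, coeff_C_mul, Finset.mul_sum, mul_assoc]

private lemma psComp_X_mul (P f : PowerSeries R) (hf : constantCoeff f = 0) :
    psComp (X * P) f = f * psComp P f := by
  ext n
  rw [coeff_psComp, coeff_mul]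
  have hR : ∀ p ∈ Finset.HasAntidiagonal.antidiagonal n,
      coeff p.1 f * coeff p.2 (psComp P f)
      = ∑ k ∈ Finset.range (n + 1), coeff k P * (coeff p.1 f * coeff p.2 (f ^ k)) := by
    intro p hp
    have hp2 : p.2 ≤ n := by have := Finset.HasAntidiagonal.mem_antidiagonal.mp hp; omega
    rw [coeff_psComp, Finset.mul_sum]
    rw [Finset.sum_subset (Finset.range_subset_range.mpr (Nat.succ_le_succ hp2))]
    · exact Finset.sum_congr rfl fun k _ => by ring
    · intro k hk hk2
      simp only [Finset.mem_range] at hk hk2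
      rw [coeff_pow_eq_zero' hf (by omega), mul_zero, mul_zero]
  rw [Finset.sum_congr rfl hR, Finset.sum_comm]
  have hR2 : ∀ k ∈ Finset.range (n + 1),
      (∑ p ∈ Finset.HasAntidiagonal.antidiagonal n, coeff k P * (coeff p.1 f * coeff p.2 (f ^ k)))
      = coeff k P * coeff n (f ^ (k + 1)) := by
    intro k _
    rw [← Finset.mul_sum, pow_succ, mul_comm (f ^ k) f, coeff_mul]
  rw [Finset.sum_congr rfl hR2]
  rw [Finset.sum_range_succ' (fun k => coeff k (X * P) * coeff n (f ^ k)) n,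
    Finset.sum_range_succ (fun k => coeff k P * coeff n (f ^ (k + 1))) n]
  rw [coeff_pow_eq_zero' hf (Nat.lt_succ_self n), mul_zero, add_zero]
  have h0 : coeff 0 (X * P) = 0 := by
    rw [coeff_zero_eq_constantCoeff, map_mul, constantCoeff_X, zero_mul]
  rw [h0, zero_mul, add_zero]
  exact Finset.sum_congr rfl fun k _ => by rw [coeff_succ_X_mul]

end PsCompLemmas

private instance : CharP ((ZMod 3)⟦X⟧) 3 := by
  constructor
  intro n
  rw [← map_natCast (C) n]
  constructor
  · intro h
    have := congrArg (constantCoeff) h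
    simp only [constantCoeff_C, map_zero] at this
    exact (ZMod.natCast_eq_zero_iff n 3).mp this
  · intro h
    rw [(ZMod.natCast_eq_zero_iff n 3).mpr h, map_zero]

private lemma frob_poly (P : Polynomial (ZMod 3)) {n : ℕ} (hn : ¬ (3 ∣ n)) :
    coeff n ((P : (ZMod 3)⟦X⟧) ^ 3) = 0 := by
  induction P using Polynomial.induction_on' with
  | add p q hp hq =>
    rw [Polynomial.coe_add, add_pow_char _ _ 3, map_add, hp, hq, add_zero]
  | monomial k a =>
    rw [Polynomial.coe_monomial]
    have hCX : monomial k a = C a * X ^ k := by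
      ext m
      rw [coeff_monomial, coeff_C_mul, coeff_X_pow]
      split_ifs <;> simp
    rw [hCX, mul_pow, ← map_pow, ← pow_mul, coeff_C_mul, coeff_X_pow,
      if_neg (by intro h; exact hn ⟨k, by omega⟩), mul_zero]

private lemma frob (f : (ZMod 3)⟦X⟧) {n : ℕ} (hn : ¬ (3 ∣ n)) :
    coeff n (f ^ 3) = 0 := by
  set P := trunc (n + 1) f with hP
  have hd : (X : (ZMod 3)⟦X⟧) ^ (n + 1) ∣ (f - ↑P) := by
    rw [X_pow_dvd_iff]
    intro m hm
    rw [map_sub, Polynomial.coeff_coe, hP, coeff_trunc, if_pos hm, sub_self]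
  obtain ⟨u, hu⟩ := hd
  have hf : f = (↑P : (ZMod 3)⟦X⟧) + X ^ (n + 1) * u := by rw [← hu]; ring
  rw [hf, add_pow_char _ _ 3, map_add, frob_poly P hn, zero_add, mul_pow, ← pow_mul]
  exact X_pow_dvd_iff.mp (Dvd.intro _ rfl) n (by omega)

private lemma deriv_eq_zero_iff (F : (ZMod 3)⟦X⟧) :
    d⁄dX (ZMod 3) F = 0 ↔ ∀ n : ℕ, ¬ (3 ∣ n) → coeff n F = 0 := by
  constructor
  · intro h n hn
    obtain ⟨m, rfl⟩ : ∃ m, n = m + 1 := ⟨n - 1, by omega⟩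
    have h2 := congrArg (coeff m) h
    rw [coeff_derivative, map_zero] at h2
    have hne : ((m + 1 : ℕ) : ZMod 3) ≠ 0 := fun h0 =>
      hn ((ZMod.natCast_eq_zero_iff (m + 1) 3).mp h0)
    have := mul_eq_zero.mp h2
    push_cast at this hne
    tauto
  · intro h
    ext m
    rw [coeff_derivative, map_zero]
    by_cases h3 : 3 ∣ (m + 1)
    · have : ((m + 1 : ℕ) : ZMod 3) = 0 := (ZMod.natCast_eq_zero_iff (m + 1) 3).mpr h3
      push_cast at this
      rw [this, mul_zero]
    · rw [h (m + 1) h3, zero_mul]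

private lemma coeff_diag (g : (ZMod 3)⟦X⟧) (hg0 : constantCoeff g = 1) (n : ℕ) :
    coeff n ((X * g) ^ n) = 1 := by
  rw [mul_pow]
  have := coeff_X_pow_mul (g ^ n) n 0
  rw [Nat.zero_add] at this
  rw [this, coeff_zero_eq_constantCoeff, map_pow, hg0, one_pow]

private lemma cube_psComp (g M : (ZMod 3)⟦X⟧) (hg0 : constantCoeff g = 1) :
    (∀ n : ℕ, ¬ (3 ∣ n) → coeff n M = 0) ↔
    (∀ n : ℕ, ¬ (3 ∣ n) → coeff n (psComp M (X * g)) = 0) := by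
  have key : ∀ (n k : ℕ), ¬ (3 ∣ n) → 3 ∣ k → coeff n ((X * g) ^ k) = 0 := by
    rintro n k hn ⟨j, rfl⟩
    rw [mul_comm 3 j, pow_mul]
    exact frob _ hn
  constructor
  · intro h n hn
    rw [coeff_psComp]
    apply Finset.sum_eq_zero
    intro k _
    by_cases h3 : 3 ∣ k
    · rw [key n k hn h3, mul_zero]
    · rw [h k h3, zero_mul]
  · intro h n
    induction n using Nat.strong_induction_on with
    | _ n IH =>
      intro hn
      have h2 := h n hn
      rw [coeff_psComp, Finset.sum_range_succ, coeff_diag g hg0, mul_one] at h2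
      rw [Finset.sum_eq_zero, zero_add] at h2
      · exact h2
      · intro k hk
        by_cases h3 : 3 ∣ k
        · rw [key n k hn h3, mul_zero]
        · rw [IH k (Finset.mem_range.mp hk) h3, zero_mul]

private lemma pattern_iff (A : PowerSeries (ZMod 3)) (ε : ZMod 3) (hε : ε * ε = 1) :
    (∀ k : ℕ, coeff (3 * k + 1) A = ε * coeff (3 * k) A ∧
        coeff (3 * k + 2) A = 0) ↔
    (∀ n : ℕ, ¬ (3 ∣ n) →
      coeff n (A - C ε * (X * A) + X * (X * A)) = 0) := by
  set M := A - C ε * (X * A) + X * (X * A) with hM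
  set a := fun n => coeff n A with ha
  have c0X : ∀ φ : (ZMod 3)⟦X⟧, coeff 0 (X * φ) = 0 := fun φ => by
    rw [coeff_zero_eq_constantCoeff, map_mul, constantCoeff_X, zero_mul]
  have c1 : coeff 1 M = a 1 - ε * a 0 := by
    rw [hM, map_add, map_sub, coeff_C_mul]
    rw [show (1 : ℕ) = 0 + 1 from rfl, coeff_succ_X_mul, coeff_succ_X_mul, c0X, add_zero]
  have csucc : ∀ m : ℕ, coeff (m + 2) M = a (m + 2) - ε * a (m + 1) + a m := by
    intro m
    rw [hM, map_add, map_sub, coeff_C_mul]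
    rw [show m + 2 = (m + 1) + 1 from rfl, coeff_succ_X_mul, coeff_succ_X_mul,
      coeff_succ_X_mul]
  constructor
  · intro h n hn
    obtain ⟨q, hq⟩ : ∃ q, n = 3 * q + 1 ∨ n = 3 * q + 2 := ⟨n / 3, by omega⟩
    rcases hq with rfl | rfl
    · cases q with
      | zero =>
        rw [show 3 * 0 + 1 = 1 by norm_num, c1]
        have e := (h 0).1
        rw [show 3 * 0 + 1 = 1 by norm_num, show 3 * 0 = 0 by norm_num] at e
        linear_combination e
      | succ j =>
        rw [show 3 * (j + 1) + 1 = 3 * j + 2 + 2 by ring, csucc]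
        have e1 := (h (j + 1)).1
        rw [show 3 * (j + 1) + 1 = 3 * j + 2 + 2 by ring,
          show 3 * (j + 1) = 3 * j + 2 + 1 by ring] at e1
        have e2 := (h j).2
        linear_combination e1 + e2
    · rw [show 3 * q + 2 = 3 * q + 2 from rfl, csucc]
      have e1 := (h q).1
      have e2 := (h q).2
      linear_combination e2 - ε * e1 - a (3 * q) * hε
  · intro h k
    induction k with
    | zero =>
      have h1 := h 1 (by omega)
      rw [c1] at h1
      have p1 : a 1 = ε * a 0 := by linear_combination h1
      refine ⟨by rw [show 3 * 0 + 1 = 1 by norm_num, show 3 * 0 = 0 by norm_num]; exact p1, ?_⟩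
      have h2 := h 2 (by omega)
      rw [show (2 : ℕ) = 0 + 2 from rfl, csucc] at h2
      simp only [Nat.zero_add, Nat.mul_zero] at h2 ⊢
      linear_combination h2 + ε * p1 + a 0 * hε
    | succ j IH =>
      have h4 := h (3 * j + 2 + 2) (by omega)
      rw [csucc] at h4
      have p1 : a (3 * (j + 1) + 1) = ε * a (3 * (j + 1)) := by
        rw [show 3 * (j + 1) + 1 = 3 * j + 2 + 2 by ring,
          show 3 * (j + 1) = 3 * j + 2 + 1 by ring]
        linear_combination h4 - IH.2
      refine ⟨p1, ?_⟩
      have h5 := h (3 * j + 3 + 2) (by omega)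
      rw [csucc] at h5
      rw [show 3 * (j + 1) + 2 = 3 * j + 3 + 2 by ring]
      have p1' := p1
      rw [show 3 * (j + 1) + 1 = 3 * j + 3 + 1 by ring,
        show 3 * (j + 1) = 3 * j + 3 by ring] at p1'
      linear_combination h5 + ε * p1' + a (3 * j + 3) * hε

private lemma main_eps (g A : PowerSeries (ZMod 3))
    (hA0 : coeff 0 A = 1)
    (hgA : g = psComp A (X * g)) (ε : ZMod 3) (hε : ε * ε = 1) :
    (d⁄dX (ZMod 3) g = C ε * g ^ 2) ↔
    (∀ k : ℕ, coeff (3 * k + 1) A = ε * coeff (3 * k) A ∧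
        coeff (3 * k + 2) A = 0) := by
  have hw0 : constantCoeff (X * g) = 0 := by
    rw [map_mul, constantCoeff_X, zero_mul]
  have hg0 : constantCoeff g = 1 := by
    have h0 : coeff 0 g = 1 := by
      rw [hgA, coeff_psComp, Finset.sum_range_one, pow_zero, hA0, one_mul,
        coeff_zero_eq_constantCoeff, map_one]
    rw [← coeff_zero_eq_constantCoeff]
    exact h0
  set M := A - C ε * (X * A) + X * (X * A) with hMdef
  have hMw : psComp M (X * g) = g - C ε * (X * g ^ 2) + X ^ 2 * g ^ 3 := by
    rw [hMdef, psComp_add, psComp_sub, psComp_C_mul, psComp_X_mul _ _ hw0,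
      psComp_X_mul _ _ hw0, psComp_X_mul _ _ hw0, ← hgA]
    ring
  have h3 : (3 : (ZMod 3)⟦X⟧) = 0 := by
    exact_mod_cast CharP.cast_eq_zero ((ZMod 3)⟦X⟧) 3
  have hεC : C ε * C ε = 1 := by rw [← map_mul, hε, map_one]
  have hDG : d⁄dX (ZMod 3) (g - C ε * (X * g ^ 2) + X ^ 2 * g ^ 3)
      = (1 + C ε * (X * g)) * (d⁄dX (ZMod 3) g - C ε * g ^ 2) := by
    simp only [map_add, map_sub, Derivation.leibniz, Derivation.leibniz_pow, derivative_X,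
      derivative_C, smul_eq_mul, nsmul_eq_mul, Nat.cast_ofNat, mul_zero, zero_mul, add_zero,
      zero_add, mul_one, one_mul, pow_one]
    linear_combination (norm := ring_nf)
      (- C ε * (X * g * d⁄dX (ZMod 3) g) + X ^ 2 * g ^ 2 * d⁄dX (ZMod 3) g
        + X * g ^ 3) * h3 + (X * g ^ 3) * hεC
  have hne : (1 + C ε * (X * g)) ≠ 0 := by
    intro hh
    have h1 := congrArg (constantCoeff) hh
    simp only [map_add, map_one, map_mul, constantCoeff_C, constantCoeff_X, zero_mul,
      mul_zero, add_zero, map_zero] at h1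
    exact one_ne_zero h1
  have step1 : (d⁄dX (ZMod 3) g = C ε * g ^ 2) ↔
      d⁄dX (ZMod 3) (g - C ε * (X * g ^ 2) + X ^ 2 * g ^ 3) = 0 := by
    rw [hDG, mul_eq_zero]
    constructor
    · intro hd
      exact Or.inr (by rw [hd, sub_self])
    · rintro (hd | hd)
      · exact absurd hd hne
      · exact sub_eq_zero.mp hd
  rw [step1, deriv_eq_zero_iff, ← hMw, ← cube_psComp g M hg0, hMdef, ← pattern_iff A ε hε]

/-- Let `g` be a power series over `ℤ/3ℤ` and `A` its ternary `A`-sequence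
generating function for the Bell-type Riordan array `(g, zg)`, i.e. `[z^0]A = 1` and
`g = A(zg)`.  Then `G_n^σ(g,zg)` is i1-decomposable (equivalently `g′ = g²` or
`g′ = −g²`) if and only if either `a_{3k+1} = a_{3k}` and `a_{3k+2} = 0` for all
`k ≥ 0`, or `a_{3k+1} = −a_{3k}` and `a_{3k+2} = 0` for all `k ≥ 0`. -/
theorem i1_decomposable_iff_A_sequence (g A : PowerSeries (ZMod 3))
    (hA0 : coeff 0 A = 1)
    (hgA : g = psComp A (X * g)) :
    (d⁄dX (ZMod 3) g = g ^ 2 ∨ d⁄dX (ZMod 3) g = -g ^ 2) ↔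
    ((∀ k : ℕ, coeff (3 * k + 1) A = coeff (3 * k) A ∧
        coeff (3 * k + 2) A = 0) ∨
     (∀ k : ℕ, coeff (3 * k + 1) A = -coeff (3 * k) A ∧
        coeff (3 * k + 2) A = 0)) := by
  have h1 := main_eps g A hA0 hgA 1 (by norm_num)
  have h2 := main_eps g A hA0 hgA (-1) (by norm_num)
  simp only [map_one, one_mul] at h1
  simp only [map_neg, map_one, neg_mul, one_mul, neg_one_mul] at h2
  exact or_congr h1 h2
end

section
/- Let g be a formal power series over ℤ/3ℤ with [z^0]g = 1 and g′ = g² (formal derivative). Then for every integer i ≥ 1 and every integer k with 1 ≤ k ≤ 3^i, one has [z^{3^i − k}] g^k = (−1)^{k+1} in ℤ/3ℤ. Equivalently, for n = 3^i + 1 the n-th row of the skew-adjacency matrix of the i1-decomposable Bell-type oriented Riordan graph G_n^σ(g, zg) is (1, −1, 1, −1, …, 1, −1, 1, 0). -/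
open PowerSeries

lemma coeff_pow_three_aux (h : PowerSeries (ZMod 3)) (N : ℕ) :
    coeff (3 * N) (h ^ 3) = coeff N h := by
  haveI : Fact (Nat.Prime 3) := ⟨by norm_num⟩
  set n := 3 * N with hn
  set q : Polynomial (ZMod 3) := trunc (n + 1) h with hq
  have h1 : coeff n (h ^ 3) = (q ^ 3).coeff n := by
    rw [← coeff_coe_trunc_of_lt (Nat.lt_succ_self n), ← trunc_trunc_pow,
      coeff_coe_trunc_of_lt (Nat.lt_succ_self n), ← Polynomial.coe_pow,
      Polynomial.coeff_coe]
  have h2 : q ^ 3 = Polynomial.expand (ZMod 3) 3 q := by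
    rw [← Polynomial.map_frobenius_expand 3 q, ZMod.frobenius_zmod, Polynomial.map_id]
  rw [h1, h2, Polynomial.coeff_expand (by norm_num : 0 < 3)]
  simp only [hn, Nat.mul_div_cancel_left N (by norm_num : 0 < 3), dvd_mul_right, if_true]
  rw [hq, ← Polynomial.coeff_coe, coeff_coe_trunc_of_lt]
  omega

lemma sgn_aux (a b : ℕ) (h : a % 2 = b % 2) : ((-1 : ZMod 3)) ^ a = (-1) ^ b := by
  conv_lhs => rw [← Nat.div_add_mod a 2]
  conv_rhs => rw [← Nat.div_add_mod b 2]
  rw [pow_add, pow_add, pow_mul, pow_mul, h]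
  norm_num

lemma deriv_rel_aux (g : PowerSeries (ZMod 3)) (hg : d⁄dX (ZMod 3) g = g ^ 2)
    (k n : ℕ) (hk : 1 ≤ k) :
    (k : ZMod 3) * coeff n (g ^ (k + 1)) =
      ((n + 1 : ℕ) : ZMod 3) * coeff (n + 1) (g ^ k) := by
  have h1 : d⁄dX (ZMod 3) (g ^ k) = k • g ^ (k + 1) := by
    rw [Derivation.leibniz_pow, hg, smul_eq_mul, ← pow_add]
    congr 2
    omega
  have h2 := congrArg (coeff n) h1
  rw [coeff_derivative, map_nsmul, nsmul_eq_mul] at h2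
  rw [h2.symm]
  push_cast
  ring

lemma main_aux (g : PowerSeries (ZMod 3)) (hg0 : coeff 0 g = 1)
    (hg : d⁄dX (ZMod 3) g = g ^ 2) :
    ∀ i, ∀ k, 1 ≤ k → k ≤ 3 ^ i →
      coeff (3 ^ i - k) (g ^ k) = (-1) ^ (k + 1) := by
  intro i
  induction i with
  | zero =>
    intro k h1 h2
    have hk : k = 1 := by simpa using le_antisymm h2 h1
    subst hk
    simpa using hg0
  | succ i ih =>
    have h3i : (3 : ℕ) ^ (i + 1) = 3 * 3 ^ i := by ring
    have step : ∀ k, 1 ≤ k → k + 1 ≤ 3 ^ (i + 1) → ¬ (3 ∣ k) →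
        coeff (3 ^ (i + 1) - (k + 1)) (g ^ (k + 1)) =
          - coeff (3 ^ (i + 1) - k) (g ^ k) := by
      intro k hk1 hk2 hk3
      have hrel := deriv_rel_aux g hg k (3 ^ (i + 1) - (k + 1)) hk1
      have hn : 3 ^ (i + 1) - (k + 1) + 1 = 3 ^ (i + 1) - k := by omega
      rw [hn] at hrel
      have hcast : ((3 ^ (i + 1) - k : ℕ) : ZMod 3) = - (k : ZMod 3) := by
        rw [Nat.cast_sub (by omega)]
        have : ((3 ^ (i + 1) : ℕ) : ZMod 3) = 0 :=
          (ZMod.natCast_eq_zero_iff _ 3).mpr (dvd_pow_self 3 (Nat.succ_ne_zero i))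
        rw [this, zero_sub]
      rw [hcast] at hrel
      have hku : (k : ZMod 3) ≠ 0 := fun h =>
        hk3 ((ZMod.natCast_eq_zero_iff k 3).mp h)
      have hrel2 : (k : ZMod 3) * coeff (3 ^ (i + 1) - (k + 1)) (g ^ (k + 1)) =
          (k : ZMod 3) * (- coeff (3 ^ (i + 1) - k) (g ^ k)) := by
        rw [hrel]; ring
      exact mul_left_cancel₀ hku hrel2
    have hA : ∀ t, 1 ≤ t → t ≤ 3 ^ i →
        coeff (3 ^ (i + 1) - 3 * t) (g ^ (3 * t)) = (-1) ^ (t + 1) := by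
      intro t ht1 ht2
      have h3 : 3 ^ (i + 1) - 3 * t = 3 * (3 ^ i - t) := by omega
      rw [h3, show g ^ (3 * t) = (g ^ t) ^ 3 by rw [← pow_mul, mul_comm],
        coeff_pow_three_aux, ih t ht1 ht2]
    intro k hk1 hk2
    set t := k / 3 with ht
    have hmod := Nat.div_add_mod k 3
    rcases (by omega : k % 3 = 0 ∨ k % 3 = 1 ∨ k % 3 = 2) with h | h | h
    · -- k = 3t
      have hk : k = 3 * t := by omega
      rw [hk, hA t (by omega) (by omega)]
      exact sgn_aux _ _ (by omega)
    · -- k = 3t+1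
      have hk : k = 3 * t + 1 := by omega
      have hb : t + 1 ≤ 3 ^ i := by omega
      have e3 := hA (t + 1) (by omega) hb
      have e1 := step (3 * t + 1) (by omega) (by omega) (by omega)
      have e2 := step (3 * t + 2) (by omega) (by omega) (by omega)
      rw [show 3 * t + 2 + 1 = 3 * (t + 1) by ring] at e2
      rw [show 3 * t + 1 + 1 = 3 * t + 2 by ring] at e1
      rw [e1, neg_neg] at e2
      rw [hk, e2.symm.trans e3]
      exact sgn_aux _ _ (by omega)
    · -- k = 3t+2
      have hk : k = 3 * t + 2 := by omega
      have hb : t + 1 ≤ 3 ^ i := by omega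
      have e3 := hA (t + 1) (by omega) hb
      have e1 := step (3 * t + 1) (by omega) (by omega) (by omega)
      have e2 := step (3 * t + 2) (by omega) (by omega) (by omega)
      rw [show 3 * t + 2 + 1 = 3 * (t + 1) by ring] at e2
      rw [show 3 * t + 1 + 1 = 3 * t + 2 by ring] at e1
      have h5 : coeff (3 ^ (i + 1) - (3 * t + 2)) (g ^ (3 * t + 2)) =
          -(-1 : ZMod 3) ^ (t + 1 + 1) := by
        rw [← e3, e2]; ring
      rw [hk, h5, show (-(-1 : ZMod 3) ^ (t + 1 + 1)) = (-1) ^ (t + 3) by ring]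
      exact sgn_aux _ _ (by omega)

/-- Let `g` be a power series over `ℤ/3ℤ` with `[z^0]g = 1` and `g′ = g²`.  Then for
every `i ≥ 1` and `1 ≤ k ≤ 3^i`, `[z^{3^i − k}] g^k = (−1)^{k+1}`; i.e. for
`n = 3^i + 1` the `n`-th row of the skew-adjacency matrix of the i1-decomposable
Bell-type oriented Riordan graph `G_n^σ(g, zg)` is `(1, −1, 1, −1, …, 1, −1, 1, 0)`. -/
theorem bell_row_three_pow_add_one (g : PowerSeries (ZMod 3))
    (hg0 : coeff 0 g = 1)
    (hg : d⁄dX (ZMod 3) g = g ^ 2)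
    (i : ℕ) (hi : 1 ≤ i) (k : ℕ) (hk1 : 1 ≤ k) (hk : k ≤ 3 ^ i) :
    coeff (3 ^ i - k) (g ^ k) = (-1) ^ (k + 1) := by
  exact main_aux g hg0 hg i k hk1 hk
end
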